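/- Let K be a group in which every element has a unique square root, and let σ be an anti-automorphism of K with σ² = id. Set K^σ = {p ∈ K : σ(p) = p} and K^ω = {k ∈ K : ω(k) = k} where ω(g) = σ(g)⁻¹ (an automorphism). Then multiplication gives a bijection K^σ × K^ω → K; explicitly, every g ∈ K decomposes uniquely as g = p·k with p ∈ K^σ and k ∈ K^ω, where p is the unique square root of g·σ(g). -/

import Mathlib

/-- Let `K` be a group in which every element has a unique square
root, and `σ` an involutive anti-automorphism of `K`.  With `K^σ = {p : σ p = p}` and
`K^ω = {k : σ k = k⁻¹}` (the fixed points of `ω = inv ∘ σ`), multiplication gives a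
bijection `K^σ × K^ω → K`: every `g` decomposes uniquely as `g = p·k` with `σ p = p`
and `σ k = k⁻¹`; moreover `p` is the unique square root of `g·σ(g)`. -/
theorem stmt5 (K : Type) [Group K]
    (σ : K → K) (hanti : ∀ g h : K, σ (g * h) = σ h * σ g) (hinv : ∀ g, σ (σ g) = g)
    (hsq : ∀ g : K, ∃! h : K, h * h = g) :
    (∀ g : K, ∃! pk : K × K, σ pk.1 = pk.1 ∧ σ pk.2 = pk.2⁻¹ ∧ g = pk.1 * pk.2) ∧
    (∀ g p k : K, σ p = p → σ k = k⁻¹ → g = p * k → p * p = g * σ g) := by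
  have hσ1 : σ 1 = 1 := by
    have h := hanti 1 1
    simp only [mul_one] at h
    exact right_eq_mul.mp h
  have hσinv : ∀ g : K, σ g⁻¹ = (σ g)⁻¹ := by
    intro g
    have h : σ g⁻¹ * σ g = 1 := by rw [← hanti, mul_inv_cancel, hσ1]
    exact eq_inv_of_mul_eq_one_left h
  have part2 : ∀ g p k : K, σ p = p → σ k = k⁻¹ → g = p * k → p * p = g * σ g := by
    intro g p k hp hk hg
    subst hg
    rw [hanti, hk, hp]
    group
  refine ⟨?_, part2⟩
  intro g
  obtain ⟨p, hp2, hpu⟩ := hsq (g * σ g)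
  have hfix : σ (g * σ g) = g * σ g := by rw [hanti, hinv]
  have hpσ : σ p = p := hpu (σ p) (by show σ p * σ p = g * σ g; rw [← hanti, hp2, hfix])
  refine ⟨(p, p⁻¹ * g), ⟨hpσ, ?_, by simp⟩, ?_⟩
  · show σ (p⁻¹ * g) = (p⁻¹ * g)⁻¹
    rw [hanti, hσinv, hpσ, mul_inv_rev, inv_inv]
    have h : g * (σ g * p⁻¹) = g * (g⁻¹ * p) := by
      rw [← mul_assoc, ← hp2]; group
    exact mul_left_cancel h
  · rintro ⟨q, l⟩ ⟨hq, hl, hgl⟩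
    have hq2 : q * q = g * σ g := part2 g q l hq hl hgl
    have hqp : q = p := hpu q hq2
    subst hqp
    have hle : l = q⁻¹ * g := by rw [hgl]; group
    simp [hle]
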